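/- In any uncountable Polish space P, there exist 2^ℵ₀ pairwise disjoint Bernstein sets B_t (t ∈ ℝ) such that for every t, B_t is not homeomorphic to any subspace of P \ B_t. -/

import Mathlib

/-- A Cantor set in a topological space: nonempty, compact, totally disconnected, perfect. -/
def IsCantorSet {P : Type*} [TopologicalSpace P] (C : Set P) : Prop :=
  C.Nonempty ∧ IsCompact C ∧ IsTotallyDisconnected C ∧ Perfect C

/-- A Bernstein set: no Cantor set is contained in it or in its complement. -/
def IsBernstein {P : Type*} [TopologicalSpace P] (B : Set P) : Prop :=
  ∀ C : Set P, IsCantorSet C → ¬C ⊆ B ∧ ¬C ⊆ Bᶜ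

open Set Filter Topology Cardinal Function

set_option linter.unusedSectionVars false

namespace BernsteinAux

universe u

noncomputable section

variable {P : Type u} [MetricSpace P] [CompleteSpace P] [SecondCountableTopology P]

/-- a countable dense-in-`s` sequence -/
lemma exists_dense_seq (s : Set P) (hs : s.Nonempty) :
    ∃ u : ℕ → P, range u ⊆ s ∧ s ⊆ closure (range u) := by
  have : Nonempty ↥s := hs.to_subtype
  obtain ⟨D, Dc, Dd⟩ := TopologicalSpace.exists_countable_dense (↥s)
  obtain ⟨f, hf⟩ := Dc.exists_eq_range Dd.nonempty
  refine ⟨fun n => (f n : P), ?_, ?_⟩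
  · rintro x ⟨n, rfl⟩; exact (f n).2
  · intro x hx
    have h1 : (⟨x, hx⟩ : ↥s) ∈ closure D := Dd _
    have h2 : Subtype.val '' closure D ⊆ closure (Subtype.val '' D) :=
      image_closure_subset_closure_image continuous_subtype_val
    have h3 : x ∈ closure (Subtype.val '' D) := h2 ⟨⟨x, hx⟩, h1, rfl⟩
    have : Subtype.val '' D = range fun n => (f n : P) := by
      rw [hf, ← range_comp]; rfl
    rwa [this] at h3

lemma mk_le_continuum_of_sep : #P ≤ Cardinal.continuum.{u} := by
  rcases isEmpty_or_nonempty P with hP | hP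
  · simp [Cardinal.mk_eq_zero]
  obtain ⟨u, -, hu⟩ := exists_dense_seq (univ : Set P) univ_nonempty
  have hinj : Function.Injective fun x : P => fun n => dist x (u n) := by
    intro x y hxy
    have hd : ∀ n, dist x (u n) = dist y (u n) := fun n => congrFun hxy n
    by_contra hne
    have hpos : 0 < dist x y := dist_pos.2 hne
    obtain ⟨p, ⟨n, rfl⟩, hp⟩ := Metric.mem_closure_iff.1 (hu (mem_univ x)) (dist x y / 2)
      (by linarith)
    have : dist x y ≤ dist x (u n) + dist (u n) y := dist_triangle _ _ _
    rw [dist_comm (u n) y, ← hd n] at this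
    linarith
  have h1 : Cardinal.lift.{0} #P ≤ Cardinal.lift.{u} #(ℕ → ℝ) :=
    Cardinal.lift_mk_le'.2 ⟨⟨_, hinj⟩⟩
  have h2 : #(ℕ → ℝ) = Cardinal.continuum.{0} := by
    simp [Cardinal.mk_arrow, Cardinal.mk_real, Cardinal.continuum_power_aleph0]
  rw [h2, Cardinal.lift_continuum, Cardinal.lift_uzero] at h1
  exact h1

lemma continuum_le_mk_perfect {C : Set P} (hC : Perfect C) (hne : C.Nonempty) :
    Cardinal.continuum.{u} ≤ #C := by
  obtain ⟨f, hfC, -, hfinj⟩ := hC.exists_nat_bool_injection hne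
  have hinj : Function.Injective fun x : ℕ → Bool => (⟨f x, hfC ⟨x, rfl⟩⟩ : C) := by
    intro x y hxy
    exact hfinj (congrArg Subtype.val hxy)
  have h1 : Cardinal.lift.{u} #(ℕ → Bool) ≤ Cardinal.lift.{0} #C :=
    Cardinal.lift_mk_le'.2 ⟨⟨_, hinj⟩⟩
  have h2 : #(ℕ → Bool) = Cardinal.continuum.{0} := by
    simp [Cardinal.mk_arrow, Cardinal.two_power_aleph0]
  rw [h2, Cardinal.lift_continuum, Cardinal.lift_uzero] at h1
  exact h1

lemma diff_nonempty_of_card {s A : Set P} (hs : Cardinal.continuum.{u} ≤ #s)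
    (hA : #A < Cardinal.continuum.{u}) : (s \ A).Nonempty := by
  by_contra h
  rw [Set.not_nonempty_iff_eq_empty, Set.diff_eq_empty] at h
  exact absurd (hs.trans (Cardinal.mk_le_mk_of_subset h)) hA.not_ge

lemma tendsto_of_continuousOn {s : Set P} {H : P → P} (hH : ContinuousOn H s)
    {u : ℕ → P} (hu : range u ⊆ s) {x : P} (hx : x ∈ s) :
    Tendsto (fun n => H (u n)) (comap u (𝓝 x)) (𝓝 (H x)) := by
  have h1 : Tendsto u (comap u (𝓝 x)) (𝓝[s] x) := by
    rw [nhdsWithin, tendsto_inf]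
    exact ⟨tendsto_comap, tendsto_principal.2 (Eventually.of_forall fun n => hu ⟨n, rfl⟩)⟩
  exact (hH x hx).tendsto.comp h1

lemma comap_neBot_of_mem_closure {u : ℕ → P} {x : P} (h : x ∈ closure (range u)) :
    (comap u (𝓝 x)).NeBot := by
  rw [comap_neBot_iff]
  intro t ht
  rcases mem_closure_iff_nhds.1 h t ht with ⟨y, hy, n, rfl⟩
  exact ⟨n, hy⟩

variable (P) in
/-- The family of Cantor sets. -/
def CantorFam : Type u := {C : Set P // IsCantorSet C}

variable (P) in
/-- Tasks for the transfinite recursion: Bernstein tasks, rigidity tasks, padding tasks. -/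
abbrev Task : Type u :=
  (ULift.{u} ℝ × CantorFam P) ⊕ (ULift.{u} ℝ × (ℕ → P × P)) ⊕ (ULift.{u} ℝ × ULift.{u} (ℕ → Bool))

lemma mk_cantorFam_le : #(CantorFam P) ≤ Cardinal.continuum.{u} := by
  have key : ∀ C : CantorFam P, ∃ u : ℕ → P, closure (range u) = C.1 := by
    rintro ⟨C, hne, hcpt, -, -⟩
    obtain ⟨u, h1, h2⟩ := exists_dense_seq C hne
    exact ⟨u, le_antisymm (closure_minimal h1 hcpt.isClosed) h2⟩
  choose φ hφ using key
  have hinj : Function.Injective φ := by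
    intro C C' h
    exact Subtype.ext ((hφ C).symm.trans (by rw [h, hφ C']))
  refine le_trans (Cardinal.mk_le_of_injective hinj) ?_
  calc #(ℕ → P) = Cardinal.lift.{0} #P ^ Cardinal.lift.{u} #ℕ := Cardinal.mk_arrow ℕ P
    _ = #P ^ (Cardinal.aleph0 : Cardinal.{u}) := by simp
    _ ≤ Cardinal.continuum.{u} ^ (Cardinal.aleph0 : Cardinal.{u}) :=
        Cardinal.power_le_power_right mk_le_continuum_of_sep
    _ = Cardinal.continuum.{u} := Cardinal.continuum_power_aleph0

lemma mk_task_le : #(Task P) ≤ Cardinal.continuum.{u} := by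
  have hR : #(ULift.{u} ℝ) = Cardinal.continuum.{u} := by
    simp [Cardinal.mk_uLift, Cardinal.mk_real, Cardinal.lift_continuum]
  have hPP : #(ℕ → P × P) ≤ Cardinal.continuum.{u} := by
    calc #(ℕ → P × P) = Cardinal.lift.{0} #(P × P) ^ Cardinal.lift.{u} #ℕ :=
          Cardinal.mk_arrow ℕ (P × P)
      _ = #(P × P) ^ (Cardinal.aleph0 : Cardinal.{u}) := by simp
      _ ≤ Cardinal.continuum.{u} ^ (Cardinal.aleph0 : Cardinal.{u}) := by
          refine Cardinal.power_le_power_right ?_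
          rw [Cardinal.mk_prod]
          simp only [Cardinal.lift_id]
          calc #P * #P ≤ Cardinal.continuum.{u} * Cardinal.continuum.{u} :=
                mul_le_mul' mk_le_continuum_of_sep mk_le_continuum_of_sep
            _ = Cardinal.continuum.{u} :=
                Cardinal.mul_eq_self Cardinal.aleph0_le_continuum
      _ = Cardinal.continuum.{u} := Cardinal.continuum_power_aleph0
  have hB : #(ULift.{u} (ℕ → Bool)) = Cardinal.continuum.{u} := by
    rw [Cardinal.mk_uLift]
    have : #(ℕ → Bool) = Cardinal.continuum.{0} := by
      simp [Cardinal.mk_arrow, Cardinal.two_power_aleph0]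
    rw [this, Cardinal.lift_continuum]
  have hmul : ∀ a : Cardinal.{u}, a ≤ Cardinal.continuum.{u} →
      Cardinal.continuum.{u} * a ≤ Cardinal.continuum.{u} := by
    intro a ha
    calc Cardinal.continuum.{u} * a ≤ Cardinal.continuum.{u} * Cardinal.continuum.{u} :=
          mul_le_mul' le_rfl ha
      _ = _ := Cardinal.mul_eq_self Cardinal.aleph0_le_continuum
  unfold Task
  rw [Cardinal.mk_sum, Cardinal.mk_sum]
  simp only [Cardinal.lift_id, Cardinal.mk_prod, hR]
  have h1 := hmul _ (mk_cantorFam_le (P := P))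
  have h2 := hmul _ hPP
  have h3 := hmul _ hB.le
  calc Cardinal.continuum.{u} * #(CantorFam P) +
        (Cardinal.continuum.{u} * #(ℕ → P × P) + Cardinal.continuum.{u} * #(ULift.{u} (ℕ → Bool)))
      ≤ Cardinal.continuum.{u} + (Cardinal.continuum.{u} + Cardinal.continuum.{u}) := by
        gcongr
    _ = Cardinal.continuum.{u} := by
        rw [Cardinal.add_eq_self Cardinal.aleph0_le_continuum,
          Cardinal.add_eq_self Cardinal.aleph0_le_continuum]

/-- The ordinal stage type. -/
abbrev O : Type u := (Cardinal.continuum.{u}).ord.ToType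

lemma mk_Iio_O (i : O.{u}) : #(Set.Iio i) < Cardinal.continuum.{u} :=
  Cardinal.mk_Iio_ord_toType i

/-- The set of pairs that spoil a potential homeomorphism coded by `g`. -/
def spoil (g : ℕ → P × P) (used : Set P) : Set (P × P) :=
  {p | p.1 ∉ used ∧ p.2 ∉ used ∧ p.1 ∈ closure (range fun n => (g n).1) ∧
    Tendsto (fun n => (g n).2) (comap (fun n => (g n).1) (𝓝 p.1)) (𝓝 p.2)}

open Classical in
/-- What we commit at a single stage, given the set of already used points. -/
def stepFun (used : Set P) : Task P → Set (ℝ × P)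
  | Sum.inl (t, C) =>
      if h : (C.1 \ used).Nonempty then {(t.down, h.choose)} else ∅
  | Sum.inr (Sum.inl (t, g)) =>
      if h : (spoil g used).Nonempty then {(t.down, h.choose.1), (t.down, h.choose.2)} else ∅
  | Sum.inr (Sum.inr (t, _)) =>
      if h : ((univ : Set P) \ used).Nonempty then {(t.down, h.choose)} else ∅

lemma stepFun_fresh {used : Set P} {τ : Task P} {p : ℝ × P} (hp : p ∈ stepFun used τ) :
    p.2 ∉ used := by
  classical
  obtain (⟨t, C⟩ | ⟨t, g⟩ | ⟨t, σ⟩) := τ <;> rw [stepFun] at hp <;> split_ifs at hp with h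
  · obtain rfl := hp; exact h.choose_spec.2
  · exact absurd hp (Set.notMem_empty _)
  · rcases hp with rfl | rfl
    · exact h.choose_spec.1
    · exact h.choose_spec.2.1
  · exact absurd hp (Set.notMem_empty _)
  · obtain rfl := hp; exact h.choose_spec.2
  · exact absurd hp (Set.notMem_empty _)

lemma stepFun_fst {used : Set P} {τ : Task P} {p q : ℝ × P}
    (hp : p ∈ stepFun used τ) (hq : q ∈ stepFun used τ) : p.1 = q.1 := by
  classical
  obtain (⟨t, C⟩ | ⟨t, g⟩ | ⟨t, σ⟩) := τ <;> rw [stepFun] at hp hq <;> split_ifs at hp hq with h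
  · obtain rfl := hp; obtain rfl := hq; rfl
  · exact absurd hp (Set.notMem_empty _)
  · rcases hp with rfl | rfl <;> rcases hq with rfl | rfl <;> rfl
  · exact absurd hp (Set.notMem_empty _)
  · obtain rfl := hp; obtain rfl := hq; rfl
  · exact absurd hp (Set.notMem_empty _)

lemma stepFun_finite (used : Set P) (τ : Task P) : (stepFun used τ).Finite := by
  classical
  obtain (⟨t, C⟩ | ⟨t, g⟩ | ⟨t, σ⟩) := τ <;> rw [stepFun] <;> split_ifs <;>
    first
      | exact Set.finite_empty
      | exact Set.finite_singleton _
      | exact (Set.finite_singleton _).insert _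

open Classical in
/-- The transfinite recursion. -/
def FF (j : Task P ↪ O.{u}) : O.{u} → Set (ℝ × P) :=
  IsWellFounded.fix (· < ·) fun i rec =>
    if h : ∃ τ, j τ = i then
      stepFun (Prod.snd '' ⋃ k : Set.Iio i, rec k.1 k.2) h.choose else ∅

/-- All commitments before stage `i`. -/
def Epast (j : Task P ↪ O.{u}) (i : O.{u}) : Set (ℝ × P) :=
  ⋃ k : Set.Iio i, FF j k.1

open Classical in
lemma FF_eq (j : Task P ↪ O.{u}) (i : O.{u}) :
    FF j i = if h : ∃ τ, j τ = i then stepFun (Prod.snd '' Epast j i) h.choose else ∅ := by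
  rw [FF, IsWellFounded.fix_eq]
  rfl

lemma FF_apply (j : Task P ↪ O.{u}) (τ : Task P) :
    FF j (j τ) = stepFun (Prod.snd '' Epast j (j τ)) τ := by
  rw [FF_eq]
  have h : ∃ τ', j τ' = j τ := ⟨τ, rfl⟩
  rw [dif_pos h, j.injective h.choose_spec]

lemma FF_finite (j : Task P ↪ O.{u}) (i : O.{u}) : (FF j i).Finite := by
  classical
  rw [FF_eq]
  split_ifs with h
  · exact stepFun_finite _ _
  · exact Set.finite_empty

lemma card_used (j : Task P ↪ O.{u}) (i : O.{u}) :
    #(Prod.snd '' Epast j i) < Cardinal.continuum.{u} := by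
  refine lt_of_le_of_lt (Cardinal.mk_image_le) ?_
  refine lt_of_le_of_lt (Cardinal.mk_iUnion_le _) ?_
  refine Cardinal.mul_lt_of_lt Cardinal.aleph0_le_continuum (mk_Iio_O i) ?_
  refine lt_of_le_of_lt (ciSup_le' fun k => ?_) Cardinal.aleph0_lt_continuum
  exact Cardinal.mk_le_aleph0_iff.2 (FF_finite j k.1).countable

lemma FF_fresh (j : Task P ↪ O.{u}) {i : O.{u}} {p : ℝ × P} (hp : p ∈ FF j i) :
    p.2 ∉ Prod.snd '' Epast j i := by
  rw [FF_eq] at hp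
  split_ifs at hp with h
  · exact stepFun_fresh hp
  · exact absurd hp (Set.notMem_empty _)

/-- The Bernstein sets. -/
def BSet (j : Task P ↪ O.{u}) (t : ℝ) : Set P := {x | ∃ i, (t, x) ∈ FF j i}

lemma mem_used_of_lt (j : Task P ↪ O.{u}) {i i' : O.{u}} (h : i < i') {p : ℝ × P}
    (hp : p ∈ FF j i) : p.2 ∈ Prod.snd '' Epast j i' :=
  ⟨p, Set.mem_iUnion.2 ⟨⟨i, h⟩, hp⟩, rfl⟩

lemma FF_fst (j : Task P ↪ O.{u}) {i : O.{u}} {p q : ℝ × P}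
    (hp : p ∈ FF j i) (hq : q ∈ FF j i) : p.1 = q.1 := by
  classical
  rw [FF_eq] at hp hq
  split_ifs at hp hq with h
  · exact stepFun_fst hp hq
  · exact absurd hp (Set.notMem_empty _)

lemma BSet_disjoint (j : Task P ↪ O.{u}) : Pairwise (Disjoint on BSet j) := by
  intro t s hts
  rw [Function.onFun, Set.disjoint_left]
  rintro x ⟨i, hi⟩ ⟨i', hi'⟩
  rcases lt_trichotomy i i' with h | rfl | h
  · exact FF_fresh j hi' (mem_used_of_lt j h (p := (t, x)) hi)
  · exact hts (FF_fst j hi hi')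
  · exact FF_fresh j hi (mem_used_of_lt j h (p := (s, x)) hi')

lemma BSet_inter_cantor (j : Task P ↪ O.{u}) (t : ℝ) {C : Set P} (hC : IsCantorSet C) :
    (BSet j t ∩ C).Nonempty := by
  classical
  set τ : Task P := Sum.inl (ULift.up t, (⟨C, hC⟩ : CantorFam P)) with hτ
  have happ := FF_apply j τ
  have hne : (C \ Prod.snd '' Epast j (j τ)).Nonempty :=
    diff_nonempty_of_card (continuum_le_mk_perfect hC.2.2.2 hC.1) (card_used j _)
  erw [hτ, stepFun, dif_pos hne] at happ
  exact ⟨hne.choose, ⟨j τ, by rw [happ]; exact Set.mem_singleton _⟩, hne.choose_spec.1⟩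

lemma mk_ulift_bool : #(ULift.{u} (ℕ → Bool)) = Cardinal.continuum.{u} := by
  rw [Cardinal.mk_uLift]
  have : #(ℕ → Bool) = Cardinal.continuum.{0} := by
    simp [Cardinal.mk_arrow, Cardinal.two_power_aleph0]
  rw [this, Cardinal.lift_continuum]

lemma continuum_le_BSet (j : Task P ↪ O.{u}) (hP : Cardinal.continuum.{u} ≤ #P) (t : ℝ) :
    Cardinal.continuum.{u} ≤ #(BSet j t) := by
  classical
  have key : ∀ σ : ULift.{u} (ℕ → Bool), ∃ x : P,
      x ∉ Prod.snd '' Epast j (j (Sum.inr (Sum.inr (ULift.up t, σ)))) ∧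
      (t, x) ∈ FF j (j (Sum.inr (Sum.inr (ULift.up t, σ)))) := by
    intro σ
    have hne : ((univ : Set P) \
        Prod.snd '' Epast j (j (Sum.inr (Sum.inr (ULift.up t, σ))))).Nonempty :=
      diff_nonempty_of_card (by rwa [Cardinal.mk_univ]) (card_used j _)
    have happ := FF_apply j (Sum.inr (Sum.inr (ULift.up t, σ)))
    rw [stepFun, dif_pos hne] at happ
    exact ⟨hne.choose, hne.choose_spec.2, by rw [happ]; exact Set.mem_singleton _⟩
  choose x hfresh hmem using key
  have hτinj : Function.Injective
      (fun σ : ULift.{u} (ℕ → Bool) => (Sum.inr (Sum.inr (ULift.up t, σ)) : Task P)) := by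
    intro a b hab
    simpa using hab
  have hinj : Function.Injective fun σ => ((⟨x σ, j _, hmem σ⟩ : BSet j t)) := by
    intro a b hab
    have hx : x a = x b := congrArg Subtype.val hab
    by_contra hne'
    have hjj : j (Sum.inr (Sum.inr (ULift.up t, a))) ≠ j (Sum.inr (Sum.inr (ULift.up t, b))) :=
      fun h => hne' (hτinj (j.injective h))
    rcases lt_or_gt_of_ne hjj with h | h
    · have := mem_used_of_lt j h (p := (t, x a)) (hmem a)
      rw [hx] at this
      exact hfresh b this
    · have := mem_used_of_lt j h (p := (t, x b)) (hmem b)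
      rw [← hx] at this
      exact hfresh a this
  calc Cardinal.continuum.{u} = #(ULift.{u} (ℕ → Bool)) := mk_ulift_bool.symm
    _ ≤ #(BSet j t) := Cardinal.mk_le_of_injective hinj

lemma BSet_nonempty (j : Task P ↪ O.{u}) (hP : Cardinal.continuum.{u} ≤ #P) (t : ℝ) :
    (BSet j t).Nonempty := by
  by_contra h
  rw [Set.not_nonempty_iff_eq_empty] at h
  have := continuum_le_BSet j hP t
  rw [h] at this
  simp only [Cardinal.mk_emptyCollection] at this
  exact absurd (lt_of_lt_of_le Cardinal.continuum_pos this) (lt_irrefl _)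

lemma rigid (j : Task P ↪ O.{u}) (hP : Cardinal.continuum.{u} ≤ #P) (t : ℝ) (S : Set P)
    (hS : S ⊆ (BSet j t)ᶜ) : IsEmpty (↥(BSet j t) ≃ₜ ↥S) := by
  classical
  constructor
  intro e
  set H : P → P := fun x => if hx : x ∈ BSet j t then (e ⟨x, hx⟩ : P) else x with hHdef
  have hrestr : ∀ x (hx : x ∈ BSet j t), H x = (e ⟨x, hx⟩ : P) := fun x hx => dif_pos hx
  have hHS : ∀ x (hx : x ∈ BSet j t), H x ∈ S := fun x hx => by
    rw [hrestr x hx]; exact (e ⟨x, hx⟩).2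
  have hHnB : ∀ x (hx : x ∈ BSet j t), H x ∉ BSet j t := fun x hx => hS (hHS x hx)
  have hcont : ContinuousOn H (BSet j t) := by
    rw [continuousOn_iff_continuous_restrict]
    have hre : Set.restrict (BSet j t) H = fun x => (e x : P) := by
      funext x
      exact dif_pos x.2
    rw [show (BSet j t).domRestrict H = _ from hre]
    exact continuous_subtype_val.comp e.continuous_toFun
  have hinj : Set.InjOn H (BSet j t) := by
    intro x hx y hy hxy
    rw [hrestr x hx, hrestr y hy] at hxy
    have := e.toEquiv.injective (Subtype.ext hxy)
    exact congrArg Subtype.val this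
  obtain ⟨u, huB, huD⟩ := exists_dense_seq (BSet j t) (BSet_nonempty j hP t)
  set g : ℕ → P × P := fun n => (u n, H (u n)) with hg
  have happ := FF_apply j (Sum.inr (Sum.inl (ULift.up t, g)))
  have husedcard := card_used j (j (Sum.inr (Sum.inl (ULift.up t, g)) : Task P))
  by_cases hsp : (spoil g (Prod.snd ''
      Epast j (j (Sum.inr (Sum.inl (ULift.up t, g)) : Task P)))).Nonempty
  · rw [stepFun, dif_pos hsp] at happ
    obtain ⟨h1, h2, hcl, htd⟩ := hsp.choose_spec
    have hp1B : hsp.choose.1 ∈ BSet j t :=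
      ⟨j (Sum.inr (Sum.inl (ULift.up t, g))), by rw [happ]; exact Set.mem_insert _ _⟩
    have hp2B : hsp.choose.2 ∈ BSet j t :=
      ⟨j (Sum.inr (Sum.inl (ULift.up t, g))), by rw [happ]; exact Set.mem_insert_of_mem _ rfl⟩
    have hclu : hsp.choose.1 ∈ closure (range u) := hcl
    haveI : (comap u (𝓝 hsp.choose.1)).NeBot := comap_neBot_of_mem_closure hclu
    have hT1 : Tendsto (fun n => H (u n)) (comap u (𝓝 hsp.choose.1)) (𝓝 (H hsp.choose.1)) :=
      tendsto_of_continuousOn hcont huB hp1B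
    have hT2 : Tendsto (fun n => H (u n)) (comap u (𝓝 hsp.choose.1)) (𝓝 hsp.choose.2) := htd
    have hHp : H hsp.choose.1 = hsp.choose.2 := tendsto_nhds_unique hT1 hT2
    exact hHnB _ hp1B (hHp ▸ hp2B)
  · have key : ∀ x, x ∈ BSet j t →
        x ∈ Prod.snd '' Epast j (j (Sum.inr (Sum.inl (ULift.up t, g)) : Task P)) ∨
        H x ∈ Prod.snd '' Epast j (j (Sum.inr (Sum.inl (ULift.up t, g)) : Task P)) := by
      intro x hx
      by_contra hcon
      push_neg at hcon
      refine hsp ⟨(x, H x), hcon.1, hcon.2, huD hx, ?_⟩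
      exact tendsto_of_continuousOn hcont huB hx
    set used := Prod.snd '' Epast j (j (Sum.inr (Sum.inl (ULift.up t, g)) : Task P)) with hused
    have hsub : BSet j t ⊆ (BSet j t ∩ used) ∪ (BSet j t ∩ H ⁻¹' used) := by
      intro x hx
      rcases key x hx with h | h
      · exact Or.inl ⟨hx, h⟩
      · exact Or.inr ⟨hx, h⟩
    have c1 : #(BSet j t ∩ used : Set P) ≤ #used :=
      Cardinal.mk_le_mk_of_subset inter_subset_right
    have c2 : #(BSet j t ∩ H ⁻¹' used : Set P) ≤ #used := by
      refine Cardinal.mk_le_of_injective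
        (f := fun x : (BSet j t ∩ H ⁻¹' used : Set P) => (⟨H x.1, x.2.2⟩ : used)) ?_
      intro a b hab
      exact Subtype.ext (hinj a.2.1 b.2.1 (congrArg Subtype.val hab))
    have hle : Cardinal.continuum.{u} ≤ #used + #used := by
      calc Cardinal.continuum.{u} ≤ #(BSet j t) := continuum_le_BSet j hP t
        _ ≤ #((BSet j t ∩ used) ∪ (BSet j t ∩ H ⁻¹' used) : Set P) :=
            Cardinal.mk_le_mk_of_subset hsub
        _ ≤ #(BSet j t ∩ used : Set P) + #(BSet j t ∩ H ⁻¹' used : Set P) :=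
            Cardinal.mk_union_le _ _
        _ ≤ #used + #used := add_le_add c1 c2
    have hlt : (#used + #used : Cardinal.{u}) < Cardinal.continuum.{u} :=
      Cardinal.add_lt_of_lt Cardinal.aleph0_le_continuum husedcard husedcard
    exact absurd (lt_of_le_of_lt hle hlt) (lt_irrefl _)

lemma continuum_le_mk_of_uncountable [Uncountable P] : Cardinal.continuum.{u} ≤ #P := by
  obtain ⟨D, hD, hDne, -⟩ := exists_perfect_nonempty_of_isClosed_of_not_countable
    isClosed_univ (by rw [Set.countable_univ_iff]; exact not_countable (α := P))
  exact le_trans (continuum_le_mk_perfect hD hDne) (Cardinal.mk_set_le D)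

end

end BernsteinAux

theorem exists_continuum_many_disjoint_rigid_bernstein_sets
    (P : Type*) [TopologicalSpace P] [PolishSpace P] [Uncountable P] :
    ∃ B : ℝ → Set P, Pairwise (Disjoint on B) ∧
      ∀ t : ℝ, IsBernstein (B t) ∧
        ∀ S : Set P, S ⊆ (B t)ᶜ → IsEmpty (↥(B t) ≃ₜ ↥S) := by
  letI := TopologicalSpace.upgradeIsCompletelyMetrizable P
  have hPcard : Cardinal.continuum ≤ #P := BernsteinAux.continuum_le_mk_of_uncountable
  have hTask : #(BernsteinAux.Task P) ≤ #(BernsteinAux.O) :=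
    le_of_le_of_eq BernsteinAux.mk_task_le (Cardinal.mk_ord_toType _).symm
  obtain ⟨j⟩ := (Cardinal.le_def _ _).1 hTask
  refine ⟨BernsteinAux.BSet j, BernsteinAux.BSet_disjoint j, fun t => ⟨?_, ?_⟩⟩
  · intro C hC
    constructor
    · intro hsub
      obtain ⟨x, hxB, hxC⟩ := BernsteinAux.BSet_inter_cantor j (t + 1) hC
      have hdis := BernsteinAux.BSet_disjoint j (show t ≠ t + 1 by norm_num)
      rw [Function.onFun, Set.disjoint_left] at hdis
      exact hdis (hsub hxC) hxB
    · intro hsub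
      obtain ⟨x, hxB, hxC⟩ := BernsteinAux.BSet_inter_cantor j t hC
      exact hsub hxC hxB
  · intro S hSsub
    exact BernsteinAux.rigid j hPcard t S hSsub
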